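/- Consider the following game with parameters an ordinal δ ≥ ω^(α+1) and a natural number N. Set δ_0 = δ. On the (i+1)-st move Player I chooses a decomposition δ_i = η + ν (ordinal addition) and Player II chooses μ < η, setting δ_{i+1} = μ + ν. Player II wins if δ_N ≥ ω^α. Then Player II has a winning strategy. -/

import Mathlib

open Ordinal

/-- Lemma 4.8: in the game where `δ_0 = δ ≥ ω^(α+1)` and at the `(i+1)`-st move
Player I chooses a partition `δ_i = η + ν` and Player II chooses `μ < η`, setting
`δ_{i+1} = μ + ν`, Player II has a strategy guaranteeing `δ_N ≥ ω^α`. -/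
theorem stmt4 (α δ : Ordinal) (N : ℕ) (hδ : Ordinal.omega0 ^ (α + 1) ≤ δ) :
    ∃ strat : ℕ → Ordinal → Ordinal,
      (∀ i η, η ≠ 0 → strat i η < η) ∧
      ∀ d η ν : ℕ → Ordinal,
        d 0 = δ →
        (∀ i < N, d i = η i + ν i ∧ η i ≠ 0 ∧ d (i + 1) = strat i (η i) + ν i) →
        Ordinal.omega0 ^ α ≤ d N := by
  have hw : (0:Ordinal) < omega0 ^ α := opow_pos α omega0_pos
  have hsucc : omega0 ^ (α + 1) = omega0 ^ α * omega0 := opow_succ _ _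
  -- the strategy
  set J : Ordinal → ℕ := fun η => sInf {k : ℕ | η ≤ omega0 ^ α * (k + 1)} with hJ
  set strat : ℕ → Ordinal → Ordinal := fun _ η =>
    if omega0 ^ (α + 1) ≤ η then omega0 ^ α * N
    else omega0 ^ α * (J η) with hstrat
  -- if η < ω^(α+1), the defining set of J is nonempty
  have hJne : ∀ η : Ordinal, η < omega0 ^ (α + 1) →
      {k : ℕ | η ≤ omega0 ^ α * (k + 1)}.Nonempty := by
    intro η hη
    rw [hsucc] at hη
    obtain ⟨c, hc, hc2⟩ := (lt_mul_iff_of_isSuccLimit isSuccLimit_omega0).1 hη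
    obtain ⟨n, rfl⟩ := lt_omega0.1 hc
    exact ⟨n, by push_cast; exact le_of_lt (hc2.trans_le (mul_le_mul_right (by push_cast; exact le_self_add) _))⟩
  have hJspec : ∀ η : Ordinal, η < omega0 ^ (α + 1) → η ≤ omega0 ^ α * (J η + 1) := by
    intro η hη
    exact Nat.sInf_mem (hJne η hη)
  have hJlt : ∀ η : Ordinal, η ≠ 0 → omega0 ^ α * (J η) < η := by
    intro η hη
    rcases Nat.eq_zero_or_pos (J η) with h0 | hpos
    · rw [h0]; simpa using pos_iff_ne_zero.2 hη
    · obtain ⟨n, hn⟩ : ∃ n, J η = n + 1 := ⟨J η - 1, by omega⟩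
      have hnot : n ∉ {k : ℕ | η ≤ omega0 ^ α * (k + 1)} := by
        intro hmem
        have h2 : J η ≤ n := Nat.sInf_le hmem
        omega
      simp only [Set.mem_setOf_eq, not_le] at hnot
      rw [hn]
      push_cast
      exact_mod_cast hnot
  refine ⟨strat, ?_, ?_⟩
  · intro i η hη
    rw [hstrat]
    by_cases h : omega0 ^ (α + 1) ≤ η
    · simp only [h, if_pos]
      calc omega0 ^ α * N < omega0 ^ α * omega0 :=
            (mul_lt_mul_iff_right₀ hw).2 (nat_lt_omega0 N)
        _ = omega0 ^ (α + 1) := hsucc.symm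
        _ ≤ η := h
    · simp only [h, if_neg, if_false]
      exact hJlt η hη
  · intro d η ν hd0 hplay
    -- invariant: ω^α * (N - i + 1) ≤ d i for i ≤ N
    have key : ∀ i ≤ N, omega0 ^ α * ((N - i : ℕ) + 1) ≤ d i := by
      intro i
      induction i with
      | zero =>
        intro _
        rw [hd0]
        refine le_trans ?_ hδ
        rw [hsucc, Nat.sub_zero]
        exact mul_le_mul_right (le_of_lt (by exact_mod_cast nat_lt_omega0 (N+1))) _
      | succ i ih =>
        intro hiN
        have hiN' : i < N := by omega
        have hinv := ih (le_of_lt hiN')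
        obtain ⟨hdi, hηne, hdsucc⟩ := hplay i hiN'
        set m : ℕ := N - i with hm
        have hm1 : m ≥ 1 := by omega
        rw [hdsucc, show (N - (i+1) : ℕ) = m - 1 from by omega]
        have hmm : ((m - 1 : ℕ) : Ordinal) + 1 = (m : ℕ) := by
          have : ((m - 1 : ℕ) : Ordinal) + ((1:ℕ):Ordinal) = ((m - 1 + 1 : ℕ) : Ordinal) := by
            push_cast; ring
          simpa [Nat.sub_add_cancel hm1] using this
        rw [hmm]
        -- so goal is ω^α * m ≤ strat i (η i) + ν i, given ω^α * (m+1) ≤ η i + ν i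
        have hinv' : omega0 ^ α * ((m : ℕ) + 1) ≤ η i + ν i := by
          rw [← hdi]
          have : ((N - i : ℕ) : Ordinal) + 1 = ((m : ℕ) : Ordinal) + 1 := by rw [hm]
          rw [← this]; exact hinv
        by_cases hν : omega0 ^ α * (m : ℕ) ≤ ν i
        · exact hν.trans le_add_self
        · push_neg at hν
          -- let k be such that ω^α * k ≤ ν i < ω^α * (k+1), k + 1 ≤ m
          have hSn : ((m - 1 : ℕ)) ∈ {k : ℕ | ν i < omega0 ^ α * (k + 1)} := by
            simp only [Set.mem_setOf_eq, hmm]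
            exact hν
          set k : ℕ := sInf {k : ℕ | ν i < omega0 ^ α * (k + 1)} with hk
          have hkmem : ν i < omega0 ^ α * (k + 1) := Nat.sInf_mem ⟨_, hSn⟩
          have hkle : k ≤ m - 1 := Nat.sInf_le hSn
          have hkν : omega0 ^ α * (k : ℕ) ≤ ν i := by
            rcases Nat.eq_zero_or_pos k with h0 | hpos
            · simp [h0]
            · obtain ⟨n, hn⟩ : ∃ n, k = n + 1 := ⟨k - 1, by omega⟩
              have hnot : n ∉ {k : ℕ | ν i < omega0 ^ α * (k + 1)} := by
                intro hmem
                have h2 : k ≤ n := Nat.sInf_le hmem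
                omega
              simp only [Set.mem_setOf_eq, not_lt] at hnot
              rw [hn]; push_cast; exact_mod_cast hnot
          rw [hstrat]
          by_cases hbig : omega0 ^ (α + 1) ≤ η i
          · simp only [hbig, if_pos]
            refine le_trans ?_ le_self_add
            exact mul_le_mul_right (by exact_mod_cast Nat.cast_le.2 (by omega : m ≤ N)) _
          · simp only [hbig, if_neg, if_false]
            push_neg at hbig
            have hηle := hJspec (η i) hbig
            set j : ℕ := J (η i) with hj
            -- η i + ν i < ω^α * (j+1) + ω^α * (k+1) = ω^α * (j+k+2)
            have hsum : omega0 ^ α * ((m : ℕ) + 1) < omega0 ^ α * ((j : ℕ) + 1 + ((k : ℕ) + 1)) := by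
              calc omega0 ^ α * ((m : ℕ) + 1) ≤ η i + ν i := hinv'
                _ < omega0 ^ α * ((j : ℕ) + 1) + omega0 ^ α * ((k : ℕ) + 1) := by
                    exact lt_of_le_of_lt (add_le_add_left hηle _) (add_lt_add_right hkmem _)
                _ = omega0 ^ α * ((j : ℕ) + 1 + ((k : ℕ) + 1)) := (mul_add _ _ _).symm
            have hlt : (m : Ordinal) + 1 < (j : ℕ) + 1 + ((k : ℕ) + 1) :=
              (mul_lt_mul_iff_right₀ hw).1 hsum
            have hnatlt : m + 1 < j + 1 + (k + 1) := by exact_mod_cast hlt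
            have hjk : m ≤ j + k := by omega
            calc omega0 ^ α * (m : ℕ)
                ≤ omega0 ^ α * ((j : ℕ) + (k : ℕ)) := by
                  refine mul_le_mul_right ?_ _
                  exact_mod_cast Nat.cast_le.2 hjk
              _ = omega0 ^ α * (j : ℕ) + omega0 ^ α * (k : ℕ) := mul_add _ _ _
              _ ≤ omega0 ^ α * (j : ℕ) + ν i := add_le_add_right hkν _
    have := key N le_rfl
    simpa using this
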